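/- Let X be a finite nonempty type and let ρ : X → X → ℝ satisfy ρ(x, y) > 0 for all x, y ∈ X and the multiplicative property ρ(x, z) = ρ(x, y) · ρ(y, z) for all x, y, z ∈ X. Fix w ∈ X and define μ : X → ℝ by μ(x) = ρ(x, w) / max_{y ∈ X} ρ(y, w). Then: (i) 0 < μ(x) ≤ 1 for all x ∈ X and μ(x₀) = 1 for some x₀ ∈ X; (ii) μ(x) / μ(y) = ρ(x, y) for all x, y ∈ X; (iii) for all x, y, z ∈ X, μ(x) ≥ μ(y) if and only if ρ(x, z) ≥ ρ(y, z). -/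

import Mathlib

theorem membership_from_subjective_ratios
    (X : Type*) [Fintype X] [Nonempty X]
    (ρ : X → X → ℝ)
    (hpos : ∀ x y : X, 0 < ρ x y)
    (hmul : ∀ x y z : X, ρ x z = ρ x y * ρ y z)
    (w : X)
    (μ : X → ℝ)
    (hμ : ∀ x : X, μ x =
      ρ x w / (Finset.univ.sup' Finset.univ_nonempty (fun y : X => ρ y w))) :
    ((∀ x : X, 0 < μ x ∧ μ x ≤ 1) ∧ ∃ x₀ : X, μ x₀ = 1) ∧
    (∀ x y : X, μ x / μ y = ρ x y) ∧
    (∀ x y z : X, μ x ≥ μ y ↔ ρ x z ≥ ρ y z) := by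
  set M := Finset.univ.sup' Finset.univ_nonempty (fun y : X => ρ y w) with hM
  obtain ⟨x₀, -, hx₀⟩ := Finset.exists_mem_eq_sup' (Finset.univ_nonempty (α := X))
    (fun y : X => ρ y w)
  have hMx : M = ρ x₀ w := hx₀
  have hMpos : 0 < M := hMx ▸ hpos x₀ w
  have hle : ∀ x : X, ρ x w ≤ M := fun x =>
    Finset.le_sup' (fun y : X => ρ y w) (Finset.mem_univ x)
  refine ⟨⟨fun x => ⟨?_, ?_⟩, x₀, ?_⟩, fun x y => ?_, fun x y z => ?_⟩
  · rw [hμ]; exact div_pos (hpos x w) hMpos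
  · rw [hμ]; exact div_le_one_of_le₀ (hle x) hMpos.le
  · rw [hμ, ← hMx, div_self hMpos.ne']
  · rw [hμ, hμ]
    field_simp
    rw [hmul x y w, mul_div_assoc, div_self (hpos y w).ne', mul_one]
  · rw [hμ, hμ, ge_iff_le, div_le_div_iff_of_pos_right hMpos,
      hmul y z w, hmul x z w, ge_iff_le,
      mul_le_mul_iff_of_pos_right (hpos z w)]
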